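/- Let Ω be a nonempty compact subset of ℝ^n (n ≥ 2), v a unit vector, and write l = l_Ω(v). Then for every z in the convex hull of Ω with z·v > l, the closed segment joining z and R_{v,l}(z) is contained in the convex hull of Ω. -/

import Mathlib

open scoped RealInnerProductSpace

/-- Reflection in the hyperplane `{x : x·v = b}` (for a unit vector `v`). -/
noncomputable def reflHyp {n : ℕ} (v : EuclideanSpace ℝ (Fin n)) (b : ℝ)
    (x : EuclideanSpace ℝ (Fin n)) : EuclideanSpace ℝ (Fin n) :=
  x - (2 * (⟪x, v⟫ - b)) • v

/-- The open cap of `X` above the hyperplane `{x : x·v = b}`. -/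
def cap {n : ℕ} (X : Set (EuclideanSpace ℝ (Fin n))) (v : EuclideanSpace ℝ (Fin n)) (b : ℝ) :
    Set (EuclideanSpace ℝ (Fin n)) :=
  X ∩ {x | b < ⟪x, v⟫}

/-- The level of the maximal cap of `X` in direction `v`. -/
noncomputable def level {n : ℕ} (X : Set (EuclideanSpace ℝ (Fin n)))
    (v : EuclideanSpace ℝ (Fin n)) : ℝ :=
  sInf {a : ℝ | ∀ b : ℝ, a ≤ b → reflHyp v b '' cap X v b ⊆ X}

/-- The minimal unfolded region (heart) of `X`. -/
noncomputable def Uf {n : ℕ} (X : Set (EuclideanSpace ℝ (Fin n))) :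
    Set (EuclideanSpace ℝ (Fin n)) :=
  ⋂ v ∈ {v : EuclideanSpace ℝ (Fin n) | ‖v‖ = 1}, {x | ⟪x, v⟫ ≤ level X v}

/-- The δ-parallel body of `Ω`: the union of closed δ-balls centered in `Ω`. -/
def parallelBody {n : ℕ} (Ω : Set (EuclideanSpace ℝ (Fin n))) (δ : ℝ) :
    Set (EuclideanSpace ℝ (Fin n)) :=
  ⋃ x ∈ Ω, Metric.closedBall x δ

/-- Three-point convex combination stays in a convex set. -/
lemma combo3 {E : Type*} [AddCommGroup E] [Module ℝ E] {K : Set E} (hK : Convex ℝ K)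
    {x y z : E} (hx : x ∈ K) (hy : y ∈ K) (hz : z ∈ K) {a b c : ℝ}
    (ha : 0 ≤ a) (hb : 0 ≤ b) (hc : 0 ≤ c) (habc : a + b + c = 1) :
    a • x + b • y + c • z ∈ K := by
  have := hK.sum_mem (t := (Finset.univ : Finset (Fin 3))) (w := ![a, b, c]) (z := ![x, y, z])
    (by intro i _; fin_cases i <;> simpa) (by simp [Fin.sum_univ_three]; linarith)
    (by intro i _; fin_cases i <;> simpa)
  simpa [Fin.sum_univ_three] using this

lemma inner_combo {n : ℕ} (v z1 z2 : EuclideanSpace ℝ (Fin n)) (a c : ℝ) :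
    ⟪a • z1 + c • z2, v⟫ = a * ⟪z1, v⟫ + c * ⟪z2, v⟫ := by
  rw [inner_add_left, real_inner_smul_left, real_inner_smul_left]

lemma refl_tendsto {n : ℕ} (v x : EuclideanSpace ℝ (Fin n)) {u : ℕ → ℝ} {b : ℝ}
    (hu : Filter.Tendsto u Filter.atTop (nhds b)) :
    Filter.Tendsto (fun k : ℕ => reflHyp v (u k) x) Filter.atTop (nhds (reflHyp v b x)) := by
  have h2 : Continuous fun b : ℝ => reflHyp v b x := by
    unfold reflHyp
    fun_prop
  exact (h2.tendsto b).comp hu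

/-- Reflections of points of `Ω` strictly above `b` land in `Ω`, for every `b ≥ level`. -/
lemma refl_cap_mem {n : ℕ} {Ω : Set (EuclideanSpace ℝ (Fin n))}
    (hΩ : IsCompact Ω) {v : EuclideanSpace ℝ (Fin n)} (hv : ‖v‖ = 1)
    {b : ℝ} (hb : level Ω v ≤ b) {x : EuclideanSpace ℝ (Fin n)} (hx : x ∈ Ω)
    (hxb : b < ⟪x, v⟫) : reflHyp v b x ∈ Ω := by
  obtain ⟨M, hM⟩ := hΩ.isBounded.exists_norm_le
  have hMmem : M ∈ {a : ℝ | ∀ b : ℝ, a ≤ b → reflHyp v b '' cap Ω v b ⊆ Ω} := by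
    intro b' hb' y hy
    obtain ⟨x', ⟨hx', hx'b⟩, rfl⟩ := hy
    exfalso
    have h1 : ⟪x', v⟫ ≤ ‖x'‖ := by
      calc ⟪x', v⟫ ≤ ‖x'‖ * ‖v‖ := real_inner_le_norm x' v
        _ = ‖x'‖ := by rw [hv, mul_one]
    have := hM x' hx'
    simp only [Set.mem_setOf_eq] at hx'b
    linarith
  -- first: the strict case
  have strict : ∀ b' : ℝ, level Ω v < b' → b' < ⟪x, v⟫ → reflHyp v b' x ∈ Ω := by
    intro b' hlb' hb'x
    obtain ⟨a, haS, hab⟩ := exists_lt_of_csInf_lt ⟨M, hMmem⟩ hlb'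
    exact haS b' hab.le ⟨x, ⟨hx, hb'x⟩, rfl⟩
  rcases lt_or_eq_of_le hb with hlt | heq
  · exact strict b hlt hxb
  · -- b = level : approximate from above
    set t := ⟪x, v⟫ with htd
    set u : ℕ → ℝ := fun k => b + (t - b) / (k + 2) with hud
    have hmem : ∀ k : ℕ, reflHyp v (u k) x ∈ Ω := by
      intro k
      have hk2 : (0:ℝ) < (k:ℝ) + 2 := by positivity
      have hpos : 0 < (t - b) / (k + 2) := div_pos (by linarith) hk2
      have hlt2 : (t - b) / (k + 2) < t - b := by
        rw [div_lt_iff₀ hk2]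
        nlinarith
      exact strict (u k) (by rw [hud]; simp only; linarith [heq ▸ hpos]) (by rw [hud]; simp only; linarith)
    have hu : Filter.Tendsto u Filter.atTop (nhds b) := by
      have h0 : Filter.Tendsto (fun k : ℕ => (t - b) / ((k:ℝ) + 2)) Filter.atTop (nhds 0) := by
        have htop : Filter.Tendsto (fun k : ℕ => (k:ℝ) + 2) Filter.atTop Filter.atTop :=
          Filter.tendsto_atTop_add_const_right _ 2 tendsto_natCast_atTop_atTop
        exact Filter.Tendsto.div_atTop tendsto_const_nhds htop
      simpa using tendsto_const_nhds.add h0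
    exact hΩ.isClosed.mem_of_tendsto (refl_tendsto v x hu)
      (Filter.Eventually.of_forall hmem)

/-- The mixed-case algebra: one point strictly above the hyperplane, one (weakly) below. -/
lemma helper_mixed {n : ℕ} {K : Set (EuclideanSpace ℝ (Fin n))} (hK : Convex ℝ K)
    {v : EuclideanSpace ℝ (Fin n)} {b : ℝ} {z1 z2 : EuclideanSpace ℝ (Fin n)}
    (h1 : z1 ∈ K) (h2 : z2 ∈ K) (hR1 : reflHyp v b z1 ∈ K)
    {a c : ℝ} (ha : 0 ≤ a) (hc : 0 ≤ c) (hac : a + c = 1)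
    (ht1 : b < ⟪z1, v⟫) (ht2 : ⟪z2, v⟫ ≤ b)
    (hz : b ≤ ⟪a • z1 + c • z2, v⟫) :
    reflHyp v b (a • z1 + c • z2) ∈ K := by
  set t1 := ⟪z1, v⟫ with ht1d
  set t2 := ⟪z2, v⟫ with ht2d
  have hzc : ⟪a • z1 + c • z2, v⟫ = a * t1 + c * t2 := inner_combo v z1 z2 a c
  rw [hzc] at hz
  have hden : t1 - b > 0 := by linarith
  set s := c * (b - t2) / (t1 - b) with hs
  have hs0 : 0 ≤ s := div_nonneg (mul_nonneg hc (by linarith)) hden.le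
  have hb2 : a * b + c * b = b := by rw [← add_mul, hac, one_mul]
  have hsa : s ≤ a := by
    rw [hs, div_le_iff₀ hden]
    nlinarith [hb2, hz]
  have key : reflHyp v b (a • z1 + c • z2)
      = (a - s) • (reflHyp v b z1) + s • z1 + c • z2 := by
    simp only [reflHyp, hzc, ← ht1d]
    have hd : (t1 - b) ≠ 0 := ne_of_gt hden
    rw [hs]
    match_scalars
    · ring
    · ring
    · field_simp
      linear_combination (-b) * hac
  rw [key]
  exact combo3 hK hR1 h1 h2 (by linarith) hs0 hc (by linarith)

/-- Key lemma: reflection of a hull point above `b` lands back in the hull, for `b ≥ level`. -/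
lemma key_refl {n : ℕ} {Ω : Set (EuclideanSpace ℝ (Fin n))}
    (hΩ : IsCompact Ω) {v : EuclideanSpace ℝ (Fin n)} (hv : ‖v‖ = 1)
    {b : ℝ} (hb : level Ω v ≤ b) :
    ∀ z ∈ convexHull ℝ Ω, b ≤ ⟪z, v⟫ → reflHyp v b z ∈ convexHull ℝ Ω := by
  set K := convexHull ℝ Ω with hKd
  have hKconv : Convex ℝ K := convex_convexHull ℝ Ω
  set W : Set (EuclideanSpace ℝ (Fin n)) :=
    {z | z ∈ K ∧ (b ≤ ⟪z, v⟫ → reflHyp v b z ∈ K)} with hWd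
  have hΩW : Ω ⊆ W := by
    intro x hx
    refine ⟨subset_convexHull ℝ Ω hx, fun hbx => ?_⟩
    rcases eq_or_lt_of_le hbx with heq | hlt
    · have : reflHyp v b x = x := by simp [reflHyp, ← heq]
      rw [this]; exact subset_convexHull ℝ Ω hx
    · exact subset_convexHull ℝ Ω (refl_cap_mem hΩ hv hb hx hlt)
  have hWconv : Convex ℝ W := by
    rintro z1 ⟨hz1K, hz1R⟩ z2 ⟨hz2K, hz2R⟩ a c ha hc hac
    refine ⟨hKconv hz1K hz2K ha hc hac, fun hbz => ?_⟩
    have hzc : ⟪a • z1 + c • z2, v⟫ = a * ⟪z1, v⟫ + c * ⟪z2, v⟫ := inner_combo v z1 z2 a c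
    have h4 : a * b + c * b = b := by rw [← add_mul, hac, one_mul]
    rcases le_or_gt b ⟪z1, v⟫ with h1 | h1 <;> rcases le_or_gt b ⟪z2, v⟫ with h2 | h2
    · -- both above: reflection is affine
      have key : reflHyp v b (a • z1 + c • z2)
          = a • reflHyp v b z1 + c • reflHyp v b z2 := by
        simp only [reflHyp, hzc]
        match_scalars
        · ring
        · ring
        · linear_combination (-2 * b) * hac
      rw [key]
      exact hKconv (hz1R h1) (hz2R h2) ha hc hac
    · -- z1 above, z2 strictly below
      rcases eq_or_lt_of_le h1 with heq | hlt
      · have hc0 : c = 0 := by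
          rw [hzc, ← heq] at hbz
          by_contra hne
          have hcpos : 0 < c := lt_of_le_of_ne hc (Ne.symm hne)
          have h3 : c * ⟪z2, v⟫ < c * b := mul_lt_mul_of_pos_left h2 hcpos
          linarith
        have ha1 : a = 1 := by linarith
        rw [hc0, ha1]
        simpa using hz1R h1
      · exact helper_mixed hKconv hz1K hz2K (hz1R h1) ha hc hac hlt h2.le hbz
    · -- z2 above, z1 strictly below (symmetric)
      rcases eq_or_lt_of_le h2 with heq | hlt
      · have ha0 : a = 0 := by
          rw [hzc, ← heq] at hbz
          by_contra hne
          have hapos : 0 < a := lt_of_le_of_ne ha (Ne.symm hne)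
          have h3 : a * ⟪z1, v⟫ < a * b := mul_lt_mul_of_pos_left h1 hapos
          linarith
        have hc1 : c = 1 := by linarith
        rw [ha0, hc1]
        simpa using hz2R h2
      · rw [show a • z1 + c • z2 = c • z2 + a • z1 from add_comm _ _]
        refine helper_mixed hKconv hz2K hz1K (hz2R h2) hc ha (by linarith) hlt h1.le ?_
        rw [show c • z2 + a • z1 = a • z1 + c • z2 from add_comm _ _]
        exact hbz
    · -- both strictly below: contradiction
      exfalso
      rw [hzc] at hbz
      rcases lt_or_ge 0 a with hap | han
      · have h3 : a * ⟪z1, v⟫ < a * b := mul_lt_mul_of_pos_left h1 hap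
        have h5 : c * ⟪z2, v⟫ ≤ c * b := mul_le_mul_of_nonneg_left h2.le hc
        linarith
      · have ha0 : a = 0 := le_antisymm han ha
        have hc1 : c = 1 := by linarith
        rw [ha0, hc1, zero_mul, one_mul, zero_add] at hbz
        linarith
  intro z hz hbz
  exact (convexHull_min hΩW hWconv hz).2 hbz

theorem stmt3 {n : ℕ} (hn : 2 ≤ n) (Ω : Set (EuclideanSpace ℝ (Fin n)))
    (hΩne : Ω.Nonempty) (hΩ : IsCompact Ω) (v : EuclideanSpace ℝ (Fin n)) (hv : ‖v‖ = 1) :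
    ∀ z ∈ convexHull ℝ Ω, level Ω v < ⟪z, v⟫ →
      segment ℝ z (reflHyp v (level Ω v) z) ⊆ convexHull ℝ Ω := by
  intro z hz hlz w hw
  set l := level Ω v with hld
  set tz := ⟪z, v⟫ with htzd
  obtain ⟨a, c, ha, hc, hac, rfl⟩ := hw
  set b := tz - c * (tz - l) with hbd
  have hbl : l ≤ b := by nlinarith
  have hbtz : b ≤ tz := by nlinarith
  have key : a • z + c • reflHyp v l z = reflHyp v b z := by
    simp only [reflHyp, ← htzd, hbd]
    match_scalars
    · linear_combination hac
    · ring
  rw [key]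
  exact key_refl hΩ hv hbl z hz hbtz
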